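/- Let u_1, …, u_r be independent Rademacher variables, let V ⊆ [r] with |V| = v, and let λ > 0 satisfy 50 λ² v / d² ≤ 2^{-5} (i.e., (5/d)² λ² ≤ 2^{-8}/v). Then E[exp((5/d)² λ² (∑_{i∈V} u_i)²)] ≤ 26/25. In particular, for a clique pattern graph over ℓ nodes, the quantity λ*_{G,r} = max{λ > 0 : f_{G,r}(λ) ≤ 26/25} satisfies λ*_{G,r} ≤ 2^{-4} d (min{ℓ, r})^{-1/2}. -/

import Mathlib

open MeasureTheory ProbabilityTheory


section Aux

variable {Ω' : Type*} [MeasurableSpace Ω'] {μ : Measure Ω'} [IsProbabilityMeasure μ]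
  {r : ℕ} {u : Fin r → Ω' → ℝ}

lemma aux_abs_sinh_le_cosh (x : ℝ) : |Real.sinh x| ≤ Real.cosh x := by
  have h1 := Real.cosh_add_sinh x
  have h2 := Real.cosh_sub_sinh x
  have h3 := Real.exp_pos x
  have h4 := Real.exp_pos (-x)
  rw [abs_le]
  constructor <;> nlinarith

lemma aux_ae_pm (hmeas : ∀ i, Measurable (u i))
    (hu : ∀ i, μ {ω | u i ω = 1} = 1 / 2 ∧ μ {ω | u i ω = -1} = 1 / 2) :
    ∀ᵐ ω ∂μ, ∀ i, u i ω = 1 ∨ u i ω = -1 := by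
  rw [ae_all_iff]
  intro i
  have hA : MeasurableSet {ω | u i ω = 1} := measurableSet_eq_fun (hmeas i) measurable_const
  have hB : MeasurableSet {ω | u i ω = -1} := measurableSet_eq_fun (hmeas i) measurable_const
  have hdisj : Disjoint {ω | u i ω = 1} {ω | u i ω = -1} := by
    rw [Set.disjoint_left]
    rintro ω (h1 : u i ω = 1) (h2 : u i ω = -1)
    rw [h1] at h2; norm_num at h2
  have hunion : μ ({ω | u i ω = 1} ∪ {ω | u i ω = -1}) = 1 := by
    rw [measure_union hdisj hB, (hu i).1, (hu i).2, ENNReal.div_add_div_same]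
    rw [one_add_one_eq_two]
    exact ENNReal.div_self two_ne_zero ENNReal.ofNat_ne_top
  have hcompl : μ ({ω | u i ω = 1} ∪ {ω | u i ω = -1})ᶜ = 0 := by
    rw [measure_compl (hA.union hB) (measure_ne_top μ _), hunion, measure_univ, tsub_self]
  rw [ae_iff]
  refine measure_mono_null ?_ hcompl
  intro ω hω
  simp only [Set.mem_setOf_eq, not_or] at hω
  rw [Set.mem_compl_iff]
  simp only [Set.mem_union, Set.mem_setOf_eq]
  tauto

lemma aux_integrable {f : Ω' → ℝ} (hf : AEStronglyMeasurable f μ) {C : ℝ}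
    (h : ∀ᵐ ω ∂μ, |f ω| ≤ C) : Integrable f μ :=
  (integrable_const C).mono' hf (by filter_upwards [h] with ω hω; rwa [Real.norm_eq_abs])

lemma aux_int_u (hmeas : ∀ i, Measurable (u i))
    (hu : ∀ i, μ {ω | u i ω = 1} = 1 / 2 ∧ μ {ω | u i ω = -1} = 1 / 2) (i : Fin r) :
    ∫ ω, u i ω ∂μ = 0 := by
  have hA : MeasurableSet {ω | u i ω = 1} := measurableSet_eq_fun (hmeas i) measurable_const
  have hB : MeasurableSet {ω | u i ω = -1} := measurableSet_eq_fun (hmeas i) measurable_const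
  have h1 : u i =ᵐ[μ] fun ω => Set.indicator {ω | u i ω = 1} (fun _ => (1:ℝ)) ω
      - Set.indicator {ω | u i ω = -1} (fun _ => (1:ℝ)) ω := by
    filter_upwards [aux_ae_pm hmeas hu] with ω hω
    rcases hω i with h | h <;> simp [Set.indicator_apply, h] <;> norm_num
  rw [integral_congr_ae h1,
    integral_sub ((integrable_const (1:ℝ)).indicator hA) ((integrable_const (1:ℝ)).indicator hB),
    integral_indicator_const _ hA, integral_indicator_const _ hB, measureReal_def, measureReal_def,
    (hu i).1, (hu i).2]
  norm_num

lemma aux_int_uu (hmeas : ∀ i, Measurable (u i))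
    (hindep : iIndepFun u μ)
    (hu : ∀ i, μ {ω | u i ω = 1} = 1 / 2 ∧ μ {ω | u i ω = -1} = 1 / 2) (i j : Fin r) :
    ∫ ω, u i ω * u j ω ∂μ = if i = j then 1 else 0 := by
  split_ifs with h
  · subst h
    have heq : (fun ω => u i ω * u i ω) =ᵐ[μ] fun _ => (1:ℝ) := by
      filter_upwards [aux_ae_pm hmeas hu] with ω hω
      rcases hω i with h | h <;> rw [h] <;> norm_num
    rw [integral_congr_ae heq]; simp
  · have hind : IndepFun (u i) (u j) μ := hindep.indepFun h
    rw [hind.integral_fun_mul_eq_mul_integral (hmeas i).aestronglyMeasurable (hmeas j).aestronglyMeasurable,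
      aux_int_u hmeas hu i, aux_int_u hmeas hu j]
    ring

lemma aux_uu_integrable (hmeas : ∀ i, Measurable (u i))
    (hu : ∀ i, μ {ω | u i ω = 1} = 1 / 2 ∧ μ {ω | u i ω = -1} = 1 / 2) (i j : Fin r) :
    Integrable (fun ω => u i ω * u j ω) μ :=
  aux_integrable ((hmeas i).mul (hmeas j)).aestronglyMeasurable (C := 1) (by
    filter_upwards [aux_ae_pm hmeas hu] with ω hω
    rcases hω i with h | h <;> rcases hω j with h' | h' <;> simp [h, h', abs_mul])

end Aux

section AuxL

variable {Ω' : Type*} [MeasurableSpace Ω'] {μ : Measure Ω'} [IsProbabilityMeasure μ]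
  {r : ℕ} {u : Fin r → Ω' → ℝ}

lemma aux_L (hmeas : ∀ i, Measurable (u i))
    (hindep : iIndepFun u μ)
    (hu : ∀ i, μ {ω | u i ω = 1} = 1 / 2 ∧ μ {ω | u i ω = -1} = 1 / 2) :
    ∀ (V : Finset (Fin r)) (a : ℝ), 0 ≤ a → 2 * a * V.card ≤ 1 / 64 →
      ∫ ω, Real.exp (a * (∑ i ∈ V, u i ω) ^ 2) ∂μ ≤ Real.exp (2 * a * V.card) := by
  intro V
  classical
  induction V using Finset.induction_on with
  | empty => intro a ha hb; simp
  | @insert j V hj ih =>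
    intro a ha hbound
    have hae := aux_ae_pm hmeas hu (μ := μ)
    set k : ℕ := V.card with hk
    have hcard : (insert j V).card = k + 1 := Finset.card_insert_of_notMem hj
    rw [hcard] at hbound ⊢
    have hbR : 2 * a * ((k : ℝ) + 1) ≤ 1 / 64 := by push_cast at hbound ⊢; linarith
    set S : Ω' → ℝ := fun ω => ∑ i ∈ V, u i ω with hS
    have hSmeas : Measurable S := Finset.measurable_sum V (fun i _ => hmeas i)
    have hSb : ∀ᵐ ω ∂μ, |S ω| ≤ (k : ℝ) := by
      filter_upwards [hae] with ω hω
      calc |S ω| ≤ ∑ i ∈ V, |u i ω| := Finset.abs_sum_le_sum_abs _ _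
        _ ≤ ∑ _i ∈ V, (1 : ℝ) :=
          Finset.sum_le_sum (fun i _ => by rcases hω i with h | h <;> simp [h])
        _ = (k : ℝ) := by simp [hk]
    set a' : ℝ := a + 2 * a ^ 2 with ha'
    have ha'0 : 0 ≤ a' := by positivity
    set φ : Ω' → ℝ := fun ω => Real.exp (a * S ω ^ 2) * Real.cosh (2 * a * S ω) with hφ
    set ψ : Ω' → ℝ := fun ω => Real.exp (a * S ω ^ 2) * Real.sinh (2 * a * S ω) with hψ
    have hφmeas : Measurable φ :=
      (Real.measurable_exp.comp ((hSmeas.pow_const 2).const_mul a)).mul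
        (Real.measurable_cosh.comp (hSmeas.const_mul (2 * a)))
    have hψmeas : Measurable ψ :=
      (Real.measurable_exp.comp ((hSmeas.pow_const 2).const_mul a)).mul
        (Real.measurable_sinh.comp (hSmeas.const_mul (2 * a)))
    set C : ℝ := Real.exp (a * (k : ℝ) ^ 2) * Real.cosh (2 * a * (k : ℝ)) with hC
    have hbnd : ∀ᵐ ω ∂μ, Real.exp (a * S ω ^ 2) * Real.cosh (2 * a * S ω) ≤ C ∧
        |ψ ω| ≤ C := by
      filter_upwards [hSb] with ω hω
      have h1 : S ω ^ 2 ≤ (k : ℝ) ^ 2 := by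
        have := abs_le.mp hω
        nlinarith
      have hexp : Real.exp (a * S ω ^ 2) ≤ Real.exp (a * (k : ℝ) ^ 2) :=
        Real.exp_le_exp.mpr (by nlinarith)
      have hcosh : Real.cosh (2 * a * S ω) ≤ Real.cosh (2 * a * (k : ℝ)) := by
        rw [Real.cosh_le_cosh]
        have hk0 : (0:ℝ) ≤ (k:ℝ) := Nat.cast_nonneg _
        simp only [abs_mul, abs_of_nonneg ha, abs_of_nonneg hk0, abs_two]
        have := abs_nonneg (S ω)
        nlinarith
      constructor
      · exact mul_le_mul hexp hcosh (Real.cosh_pos _).le (Real.exp_pos _).le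
      · rw [hψ, abs_mul, abs_of_nonneg (Real.exp_pos _).le]
        calc Real.exp (a * S ω ^ 2) * |Real.sinh (2 * a * S ω)|
            ≤ Real.exp (a * S ω ^ 2) * Real.cosh (2 * a * S ω) :=
              mul_le_mul_of_nonneg_left (aux_abs_sinh_le_cosh _) (Real.exp_pos _).le
          _ ≤ C := mul_le_mul hexp hcosh (Real.cosh_pos _).le (Real.exp_pos _).le
    have hφint : Integrable φ μ := by
      refine aux_integrable hφmeas.aestronglyMeasurable (C := C) ?_
      filter_upwards [hbnd] with ω h
      have h0 : 0 ≤ φ ω := mul_nonneg (Real.exp_pos _).le (Real.cosh_pos _).le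
      rw [abs_of_nonneg h0]
      exact h.1
    have hψuint : Integrable (fun ω => ψ ω * u j ω) μ := by
      refine aux_integrable (hψmeas.mul (hmeas j)).aestronglyMeasurable (C := C) ?_
      filter_upwards [hbnd, hae] with ω h hpm
      rw [abs_mul]
      have h1 : |u j ω| ≤ 1 := by rcases hpm j with h' | h' <;> simp [h']
      calc |ψ ω| * |u j ω| ≤ C * 1 :=
            mul_le_mul h.2 h1 (abs_nonneg _) ((abs_nonneg _).trans h.2)
        _ = C := mul_one C
    have hkey : (fun ω => Real.exp (a * (∑ i ∈ insert j V, u i ω) ^ 2)) =ᵐ[μ]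
        fun ω => Real.exp a * (φ ω + ψ ω * u j ω) := by
      filter_upwards [hae] with ω hω
      rw [Finset.sum_insert hj]
      rcases hω j with h | h <;> rw [h]
      · simp only [hφ, hψ, mul_one]
        rw [← mul_add, Real.cosh_add_sinh, ← Real.exp_add, ← Real.exp_add]
        congr 1; ring
      · simp only [hφ, hψ, mul_neg_one]
        rw [← sub_eq_add_neg, ← mul_sub, Real.cosh_sub_sinh, ← Real.exp_add, ← Real.exp_add]
        congr 1; ring
    have hstep1 : ∫ ω, Real.exp (a * (∑ i ∈ insert j V, u i ω) ^ 2) ∂μ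
        = Real.exp a * ((∫ ω, φ ω ∂μ) + ∫ ω, ψ ω * u j ω ∂μ) := by
      rw [integral_congr_ae hkey, integral_const_mul, integral_add hφint hψuint]
    have hSind : IndepFun S (u j) μ := by
      have h := hindep.indepFun_finsetSum_of_notMem hmeas hj
      have heq : (∑ i ∈ V, u i) = S := by ext ω; simp [hS, Finset.sum_apply]
      rwa [heq] at h
    have hψind : IndepFun ψ (u j) μ := by
      have hg : Measurable (fun x : ℝ => Real.exp (a * x ^ 2) * Real.sinh (2 * a * x)) :=
        (Real.measurable_exp.comp ((measurable_id.pow_const 2).const_mul a)).mul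
          (Real.measurable_sinh.comp (measurable_id.const_mul (2 * a)))
      exact hSind.comp hg measurable_id
    have hstep2 : ∫ ω, ψ ω * u j ω ∂μ = 0 := by
      rw [hψind.integral_fun_mul_eq_mul_integral hψmeas.aestronglyMeasurable (hmeas j).aestronglyMeasurable,
        aux_int_u hmeas hu j, mul_zero]
    have hint2 : Integrable (fun ω => Real.exp (a' * S ω ^ 2)) μ := by
      refine aux_integrable
        (Real.measurable_exp.comp ((hSmeas.pow_const 2).const_mul a')).aestronglyMeasurable
        (C := Real.exp (a' * (k : ℝ) ^ 2)) ?_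
      filter_upwards [hSb] with ω hω
      rw [abs_of_nonneg (Real.exp_pos _).le]
      refine Real.exp_le_exp.mpr ?_
      have h1 : S ω ^ 2 ≤ (k : ℝ) ^ 2 := by
        have := abs_le.mp hω
        nlinarith
      exact mul_le_mul_of_nonneg_left h1 ha'0
    have hstep3 : ∫ ω, φ ω ∂μ ≤ ∫ ω, Real.exp (a' * S ω ^ 2) ∂μ := by
      refine integral_mono hφint hint2 (fun ω => ?_)
      have h := Real.cosh_le_exp_half_sq (2 * a * S ω)
      calc φ ω ≤ Real.exp (a * S ω ^ 2) * Real.exp ((2 * a * S ω) ^ 2 / 2) :=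
            mul_le_mul_of_nonneg_left h (Real.exp_pos _).le
        _ = Real.exp (a' * S ω ^ 2) := by rw [← Real.exp_add]; congr 1; rw [ha']; ring
    have hk0 : (0:ℝ) ≤ (k:ℝ) := Nat.cast_nonneg _
    have hIH : ∫ ω, Real.exp (a' * S ω ^ 2) ∂μ ≤ Real.exp (2 * a' * k) := by
      refine ih a' ha'0 ?_
      rw [ha']
      nlinarith [mul_nonneg ha hk0, mul_nonneg (mul_nonneg ha ha) hk0]
    calc ∫ ω, Real.exp (a * (∑ i ∈ insert j V, u i ω) ^ 2) ∂μ
        = Real.exp a * ((∫ ω, φ ω ∂μ) + ∫ ω, ψ ω * u j ω ∂μ) := hstep1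
      _ = Real.exp a * ∫ ω, φ ω ∂μ := by rw [hstep2, add_zero]
      _ ≤ Real.exp a * Real.exp (2 * a' * k) :=
          mul_le_mul_of_nonneg_left (hstep3.trans hIH) (Real.exp_pos _).le
      _ ≤ Real.exp (2 * a * ((k : ℝ) + 1)) := by
          rw [← Real.exp_add]
          refine Real.exp_le_exp.mpr ?_
          rw [ha']
          nlinarith [mul_nonneg ha hk0, mul_nonneg (mul_nonneg ha ha) hk0]
      _ = Real.exp (2 * a * ((k + 1 : ℕ) : ℝ)) := by push_cast; ring_nf

end AuxL

/-- Let `u_1, …, u_r` be independent Rademacher variables. (i) For any `V ⊆ [r]` and `λ > 0`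
with `(5/d)²λ² ≤ 2^{-8}/|V|`, we have `E[exp((5/d)²λ²(∑_{i∈V} u_i)²)] ≤ 26/25`.
(ii) In particular, for a clique pattern graph over a subset `S` of `ℓ` nodes, the quantity
`λ*_{G,r} = sup{λ > 0 : f_{G,r}(λ) ≤ 26/25}` (with
`f_{G,r}(λ) = max_π E[exp((5/d)²λ² ∑_{(i,j)∈P^{(r)}(G_π)} u_i u_j)]`) satisfies
`λ*_{G,r} ≤ 2^{-4} d (min{ℓ,r})^{-1/2}`. -/
theorem clique_lambda_star_bound {Ω' : Type*} [MeasurableSpace Ω'] (μ : Measure Ω')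
    [IsProbabilityMeasure μ] (d r ℓ : ℕ) (hr : 0 < r) (hrd : r ≤ d)
    (u : Fin r → Ω' → ℝ)
    (hmeas : ∀ i, Measurable (u i))
    (hindep : iIndepFun u μ)
    (hu : ∀ i, μ {ω | u i ω = 1} = 1 / 2 ∧ μ {ω | u i ω = -1} = 1 / 2)
    (S : Finset (Fin d)) (hS : S.card = ℓ) :
    (∀ (V : Finset (Fin r)) (lam : ℝ), 0 < lam →
        (5 / (d : ℝ)) ^ 2 * lam ^ 2 ≤ (1 / 2 ^ 8) / (V.card : ℝ) →
        ∫ ω, Real.exp ((5 / (d : ℝ)) ^ 2 * lam ^ 2 * (∑ i ∈ V, u i ω) ^ 2) ∂μ ≤ 26 / 25)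
    ∧ sSup {lam : ℝ | 0 < lam ∧
          (⨆ π : Equiv.Perm (Fin d),
            ∫ ω, Real.exp ((5 / (d : ℝ)) ^ 2 * lam ^ 2 *
              ∑ q ∈ Finset.image
                  (fun pr : Fin d × Fin d =>
                    ((⟨(π pr.1).val % r, Nat.mod_lt _ hr⟩ : Fin r),
                     (⟨(π pr.2).val % r, Nat.mod_lt _ hr⟩ : Fin r)))
                  (S ×ˢ S),
                u q.1 ω * u q.2 ω) ∂μ) ≤ 26 / 25}
        ≤ (1 / 2 ^ 4) * (d : ℝ) / Real.sqrt (min ℓ r : ℕ) := by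
  constructor
  · -- Part (i)
    intro V lam hlam hle
    set a : ℝ := (5 / (d : ℝ)) ^ 2 * lam ^ 2 with hadef
    have ha0 : 0 ≤ a := by positivity
    rcases Nat.eq_zero_or_pos V.card with h0 | hpos
    · have hVe : V = ∅ := Finset.card_eq_zero.mp h0
      simp only [hVe, Finset.sum_empty]
      norm_num
    · have hcpos : (0:ℝ) < (V.card : ℝ) := by exact_mod_cast hpos
      have hav : a * V.card ≤ 1 / 2 ^ 8 := (le_div_iff₀ hcpos).mp hle
      have hcard1 : (1:ℝ) ≤ (V.card : ℝ) := by exact_mod_cast hpos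
      have h2 : 2 * a * V.card ≤ 1 / 64 := by nlinarith
      refine (aux_L hmeas hindep hu V a ha0 h2).trans ?_
      have h3 : 2 * a * V.card ≤ 1 / 128 := by nlinarith
      have h4 : Real.exp (2 * a * V.card) ≤ Real.exp (1/128) := Real.exp_le_exp.mpr h3
      refine h4.trans ?_
      have h5 : (127:ℝ)/128 ≤ Real.exp (-(1/128)) := by
        have := Real.add_one_le_exp (-(1/128) : ℝ); linarith
      have hmul : Real.exp (1/128 : ℝ) * Real.exp (-(1/128) : ℝ) = 1 := by
        rw [← Real.exp_add]; norm_num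
      nlinarith [Real.exp_pos (1/128 : ℝ), Real.exp_pos (-(1/128):ℝ)]
  · -- Part (ii)
    rcases Nat.eq_zero_or_pos ℓ with hl0 | hlpos
    · -- degenerate case: S is empty
      have hSe : S = ∅ := Finset.card_eq_zero.mp (by rw [hS, hl0])
      subst hSe
      rw [Real.sSup_of_not_bddAbove]
      · positivity
      · intro hbdd
        obtain ⟨b, hb⟩ := hbdd
        have h1 : max b 0 + 1 ≤ b := hb (by
          constructor
          · positivity
          · simp only [Finset.empty_product, Finset.image_empty, Finset.sum_empty, mul_zero,
              Real.exp_zero, integral_const, measure_univ, ENNReal.toReal_one, one_smul,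
              ciSup_const]
            norm_num)
        have h3 : b < max b 0 + 1 := (le_max_left b 0).trans_lt (lt_add_one _)
        linarith
    · -- main case
      apply Real.sSup_le _ (by positivity)
      rintro lam ⟨hlam0, hsup⟩
      by_contra hgt
      push_neg at hgt
      set v : ℕ := min ℓ r with hv
      have hv0 : 0 < v := lt_min hlpos hr
      have hd0 : 0 < d := lt_of_lt_of_le hr hrd
      have hld : ℓ ≤ d := by
        have h := Finset.card_le_univ S
        rwa [hS, Fintype.card_fin] at h
      have hvr : v ≤ r := min_le_right _ _
      classical
      set T : Finset (Fin d) := Finset.map (Fin.castLEEmb hld) Finset.univ with hT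
      have hTcard : T.card = ℓ := by simp [hT]
      set e : {x // x ∈ S} ≃ {x // x ∈ T} := Finset.equivOfCardEq (by rw [hS, hTcard]) with he
      set f : {x // ¬ x ∈ S} ≃ {x // ¬ x ∈ T} :=
        ((Equiv.subtypeEquivRight (fun x => Finset.mem_compl)).symm.trans
          (Finset.equivOfCardEq (by simp [Finset.card_compl, hS, hTcard]))).trans
          (Equiv.subtypeEquivRight (fun x => Finset.mem_compl)) with hf
      set π : Equiv.Perm (Fin d) := Equiv.subtypeCongr e f with hπ
      have hπS : ∀ s (hs : s ∈ S), π s = ↑(e ⟨s, hs⟩) := by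
        intro s hs
        simp [hπ, Equiv.subtypeCongr, Equiv.trans_apply,
          Equiv.sumCompl_symm_apply_of_pos hs]
      set c : ℝ := (5 / (d:ℝ))^2 * lam^2 with hc
      set Q : Finset (Fin r × Fin r) := Finset.image
        (fun pr : Fin d × Fin d =>
          ((⟨(π pr.1).val % r, Nat.mod_lt _ hr⟩ : Fin r),
           (⟨(π pr.2).val % r, Nat.mod_lt _ hr⟩ : Fin r))) (S ×ˢ S) with hQ
      have hle1 : (∫ ω, Real.exp (c * ∑ q ∈ Q, u q.1 ω * u q.2 ω) ∂μ) ≤ 26/25 := by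
        refine le_trans ?_ hsup
        exact le_ciSup (f := fun π : Equiv.Perm (Fin d) =>
          ∫ ω, Real.exp ((5 / (d : ℝ)) ^ 2 * lam ^ 2 *
            ∑ q ∈ Finset.image
                (fun pr : Fin d × Fin d =>
                  ((⟨(π pr.1).val % r, Nat.mod_lt _ hr⟩ : Fin r),
                   (⟨(π pr.2).val % r, Nat.mod_lt _ hr⟩ : Fin r)))
                (S ×ˢ S),
              u q.1 ω * u q.2 ω) ∂μ)
          (Set.Finite.bddAbove (Set.finite_range _)) π
      set X : Ω' → ℝ := fun ω => ∑ q ∈ Q, u q.1 ω * u q.2 ω with hX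
      have hXmeas : Measurable X :=
        Finset.measurable_sum _ (fun q _ => (hmeas q.1).mul (hmeas q.2))
      have hae := aux_ae_pm hmeas hu (μ := μ)
      have hXb : ∀ᵐ ω ∂μ, |X ω| ≤ (Q.card : ℝ) := by
        filter_upwards [hae] with ω hω
        calc |X ω| ≤ ∑ q ∈ Q, |u q.1 ω * u q.2 ω| := Finset.abs_sum_le_sum_abs _ _
          _ ≤ ∑ _q ∈ Q, (1:ℝ) := Finset.sum_le_sum (fun q _ => by
              rcases hω q.1 with h|h <;> rcases hω q.2 with h'|h' <;>
                simp [abs_mul, h, h'])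
          _ = (Q.card : ℝ) := by simp
      have hc0 : 0 ≤ c := by positivity
      have hexpint : Integrable (fun ω => Real.exp (c * X ω)) μ := by
        refine aux_integrable
          (Real.measurable_exp.comp (hXmeas.const_mul c)).aestronglyMeasurable
          (C := Real.exp (c * Q.card)) ?_
        filter_upwards [hXb] with ω hω
        rw [abs_of_nonneg (Real.exp_pos _).le]
        exact Real.exp_le_exp.mpr
          (mul_le_mul_of_nonneg_left ((le_abs_self _).trans hω) hc0)
      have hXint : Integrable X μ := by
        rw [hX]
        exact integrable_finset_sum Q (fun q _ => aux_uu_integrable hmeas hu q.1 q.2)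
      have hlinint : Integrable (fun ω => 1 + c * X ω) μ :=
        (integrable_const 1).add (hXint.const_mul c)
      have hmono : ∫ ω, (1 + c * X ω) ∂μ ≤ ∫ ω, Real.exp (c * X ω) ∂μ := by
        refine integral_mono hlinint hexpint (fun ω => ?_)
        have := Real.add_one_le_exp (c * X ω); linarith
      have hXval : ∫ ω, X ω ∂μ = ∑ q ∈ Q, ∫ ω, u q.1 ω * u q.2 ω ∂μ := by
        rw [hX]
        exact integral_finset_sum Q (fun q _ => aux_uu_integrable hmeas hu q.1 q.2)
      have hlin : ∫ ω, (1 + c * X ω) ∂μ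
          = 1 + c * ∑ q ∈ Q, ∫ ω, u q.1 ω * u q.2 ω ∂μ := by
        rw [integral_add (integrable_const 1) (hXint.const_mul c), integral_const,
          integral_const_mul, hXval]
        simp [measure_univ]
      -- the diagonal subset
      set D : Finset (Fin r × Fin r) := Finset.image (fun w : Fin r => (w, w))
        (Finset.map (Fin.castLEEmb hvr) (Finset.univ : Finset (Fin v))) with hD
      have hDcard : D.card = v := by
        rw [hD, Finset.card_image_of_injective _
          (fun a b hab => ((Prod.mk.injEq _ _ _ _).mp hab).1)]
        simp
      have hDQ : D ⊆ Q := by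
        intro q hq
        rw [hD, Finset.mem_image] at hq
        obtain ⟨w, hw, rfl⟩ := hq
        rw [Finset.mem_map] at hw
        obtain ⟨j0, -, rfl⟩ := hw
        have hjl : (j0 : ℕ) < ℓ := lt_of_lt_of_le j0.isLt (min_le_left _ _)
        have hjr : (j0 : ℕ) < r := lt_of_lt_of_le j0.isLt (min_le_right _ _)
        have htT : Fin.castLE hld ⟨(j0:ℕ), hjl⟩ ∈ T := by
          rw [hT, Finset.mem_map]
          exact ⟨⟨(j0:ℕ), hjl⟩, Finset.mem_univ _, rfl⟩
        set s : Fin d := ↑(e.symm ⟨Fin.castLE hld ⟨(j0:ℕ), hjl⟩, htT⟩) with hs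
        have hsS : s ∈ S := (e.symm ⟨Fin.castLE hld ⟨(j0:ℕ), hjl⟩, htT⟩).2
        have hπs : π s = Fin.castLE hld ⟨(j0:ℕ), hjl⟩ := by
          rw [hπS s hsS]
          have h2 : (⟨s, hsS⟩ : {x // x ∈ S})
              = e.symm ⟨Fin.castLE hld ⟨(j0:ℕ), hjl⟩, htT⟩ := Subtype.ext hs
          rw [h2, Equiv.apply_symm_apply]
        have hval : (π s).val % r = (j0:ℕ) := by
          rw [hπs]
          simpa using Nat.mod_eq_of_lt hjr
        rw [hQ, Finset.mem_image]
        refine ⟨(s, s), Finset.mem_product.mpr ⟨hsS, hsS⟩, ?_⟩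
        simp only [Prod.mk.injEq]
        constructor <;> (apply Fin.ext; simpa [Fin.castLEEmb] using hval)
      have hsum : (v : ℝ) ≤ ∑ q ∈ Q, ∫ ω, u q.1 ω * u q.2 ω ∂μ := by
        have h1 : ∑ q ∈ D, ∫ ω, u q.1 ω * u q.2 ω ∂μ = (v : ℝ) := by
          rw [Finset.sum_congr rfl (fun q hq => ?_), Finset.sum_const, hDcard,
            nsmul_eq_mul, mul_one]
          · rw [hD, Finset.mem_image] at hq
            obtain ⟨w, hw, rfl⟩ := hq
            rw [aux_int_uu hmeas hindep hu, if_pos rfl]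
        have h2 : ∑ q ∈ D, ∫ ω, u q.1 ω * u q.2 ω ∂μ
            ≤ ∑ q ∈ Q, ∫ ω, u q.1 ω * u q.2 ω ∂μ := by
          refine Finset.sum_le_sum_of_subset_of_nonneg hDQ (fun q _ _ => ?_)
          rw [aux_int_uu hmeas hindep hu]
          split_ifs <;> norm_num
        linarith
      -- arithmetic
      have hdR : (0:ℝ) < (d:ℝ) := by exact_mod_cast hd0
      have hvR : (0:ℝ) < (v:ℝ) := by exact_mod_cast hv0
      have hB0 : (0:ℝ) ≤ (1/2^4) * (d:ℝ) / Real.sqrt (v : ℕ) := by positivity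
      have hlam2 : (d:ℝ)^2 / (256 * v) < lam^2 := by
        have hsq : ((1/2^4) * (d:ℝ) / Real.sqrt (v : ℕ))^2 = (d:ℝ)^2 / (256 * v) := by
          rw [div_pow, mul_pow, Real.sq_sqrt (Nat.cast_nonneg _)]
          ring
        rw [← hsq]
        exact pow_lt_pow_left₀ hgt hB0 two_ne_zero
      have hcv : 25/256 < c * v := by
        have hkey : c * v = 25 / (d:ℝ)^2 * lam^2 * v := by
          rw [hc, div_pow]; ring
        rw [hkey]
        rw [show (25:ℝ)/256 = 25 / (d:ℝ)^2 * ((d:ℝ)^2/(256 * v)) * v by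
          field_simp]
        have h25 : (0:ℝ) < 25 / (d:ℝ)^2 := by positivity
        exact mul_lt_mul_of_pos_right (mul_lt_mul_of_pos_left hlam2 h25) hvR
      have hfinal : (26:ℝ)/25 < 1 + c * ∑ q ∈ Q, ∫ ω, u q.1 ω * u q.2 ω ∂μ := by
        have h6 := mul_le_mul_of_nonneg_left hsum hc0
        nlinarith
      linarith [hmono, hlin, hle1, hfinal]
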